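/- The braided integers satisfy ∑_{j=0}^{t} B(s, j) ∘ T^{[s]}_{1,j} = B(s+1, t), where T^{[s]}_{1,j} braids strand s+1 past the next j strands; i.e., summing the right-action shuffles over j recovers a single braided binomial with top argument increased by one. -/

import Mathlib

/- We work in the braid group algebra, modelled as an associative ring `A` equipped with a
family `ψ i` of elements satisfying the braid relations.  The braided binomials `Bb`
(sums of Matsumoto lifts of shuffle permutations) are encoded through their defining
recursion `B(r+1,s) = B(r,s)^{[1]} + B(r+1,s-1)^{[1]} · T_{r+1,1}`. -/

variable {A : Type*} [Ring A]

/-- Shift of the generator family by `k`: `(shiftFam ψ k) i = ψ (i + k)`. -/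
def shiftFam (ψ : ℕ → A) (k : ℕ) : ℕ → A := fun i => ψ (i + k)

/-- The descending product `ψ (j+n-1) ⋯ ψ (j+1) ψ j`. -/
def fall (ψ : ℕ → A) : ℕ → ℕ → A
  | _, 0 => 1
  | j, n + 1 => fall ψ (j + 1) n * ψ j

/-- `T_{m,n} = (ψ_n ⋯ ψ_1)(ψ_{n+1} ⋯ ψ_2) ⋯ (ψ_{n+m-1} ⋯ ψ_m)`, the braiding of the
first `m` strands past the next `n` strands. -/
def Tb (ψ : ℕ → A) : ℕ → ℕ → A
  | 0, _ => 1
  | m + 1, n => Tb ψ m n * fall ψ (m + 1) n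

/-- The braided binomial `B(r,s)`: the sum of the Matsumoto lifts of all `(r,s)`-shuffle
permutations. -/
def Bb (ψ : ℕ → A) : ℕ → ℕ → A
  | 0, _ => 1
  | _ + 1, 0 => 1
  | r + 1, s + 1 =>
      Bb (shiftFam ψ 1) r (s + 1) + Bb (shiftFam ψ 1) (r + 1) s * Tb ψ (r + 1) 1
  termination_by r s => (r, s)

lemma fall_shift (ψ : ℕ → A) (k : ℕ) : ∀ n j, fall (shiftFam ψ k) j n = fall ψ (j + k) n
  | 0, j => rfl
  | n + 1, j => by
    simp only [fall, fall_shift ψ k n (j + 1), shiftFam]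
    rw [show j + 1 + k = j + k + 1 from by omega]

lemma Bb_zero (ψ : ℕ → A) : ∀ p, Bb ψ p 0 = 1
  | 0 => by simp [Bb]
  | p + 1 => by simp [Bb]

lemma Tb_one_succ (ψ : ℕ → A) (m : ℕ) : Tb ψ (m + 1) 1 = Tb ψ m 1 * ψ (m + 1) := by
  simp [Tb, fall]

lemma psi_comm_fall (ψ : ℕ → A)
    (hcomm : ∀ i j, i + 2 ≤ j → ψ i * ψ j = ψ j * ψ i) (i : ℕ) :
    ∀ n j, i + 2 ≤ j → ψ i * fall ψ j n = fall ψ j n * ψ i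
  | 0, j, _ => by simp [fall]
  | n + 1, j, h => by
    simp only [fall]
    rw [← mul_assoc, psi_comm_fall ψ hcomm i n (j + 1) (by omega), mul_assoc,
      hcomm i j h, ← mul_assoc]

lemma fall_comm_Tb (ψ : ℕ → A)
    (hcomm : ∀ i j, i + 2 ≤ j → ψ i * ψ j = ψ j * ψ i) :
    ∀ m n j, m + 2 ≤ j → fall ψ j n * Tb ψ m 1 = Tb ψ m 1 * fall ψ j n
  | 0, n, j, _ => by simp [Tb]
  | m + 1, n, j, h => by
    rw [Tb_one_succ, ← mul_assoc, fall_comm_Tb ψ hcomm m n j (by omega), mul_assoc,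
      ← psi_comm_fall ψ hcomm (m + 1) n j h, ← mul_assoc]

lemma T_swap (ψ : ℕ → A)
    (hcomm : ∀ i j, i + 2 ≤ j → ψ i * ψ j = ψ j * ψ i) (r s : ℕ) :
    fall ψ (r + 2) s * Tb ψ (r + 1) 1 = Tb ψ r 1 * fall ψ (r + 1) (s + 1) := by
  rw [Tb_one_succ, ← mul_assoc, fall_comm_Tb ψ hcomm r s (r + 2) (by omega), mul_assoc]
  rfl

lemma hcomm_shift (ψ : ℕ → A)
    (hcomm : ∀ i j, i + 2 ≤ j → ψ i * ψ j = ψ j * ψ i) (k : ℕ) :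
    ∀ i j, i + 2 ≤ j → shiftFam ψ k i * shiftFam ψ k j = shiftFam ψ k j * shiftFam ψ k i := by
  intro i j h
  exact hcomm (i + k) (j + k) (by omega)

/-- Second recursion for the braided binomial, splitting by the last position. -/
lemma Bb_last_rec (n : ℕ) : ∀ (ψ : ℕ → A),
    (∀ i j, i + 2 ≤ j → ψ i * ψ j = ψ j * ψ i) → ∀ p q, p + q ≤ n →
    Bb ψ (p + 1) (q + 1) = Bb ψ (p + 1) q + Bb ψ p (q + 1) * fall ψ (p + 1) (q + 1) := by
  induction n with
  | zero =>
    intro ψ hc p q h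
    obtain ⟨rfl, rfl⟩ : p = 0 ∧ q = 0 := by omega
    simp [Bb, Tb, fall]
  | succ n ih =>
    intro ψ hc p q h
    have hc1 := hcomm_shift ψ hc 1
    match p, q with
    | 0, 0 => simp [Bb, Tb, fall]
    | 0, q + 1 =>
      rw [show Bb ψ 1 (q + 1 + 1) =
          1 + Bb (shiftFam ψ 1) 1 (q + 1) * Tb ψ 1 1 from by simp [Bb],
        show Bb ψ 1 (q + 1) = 1 + Bb (shiftFam ψ 1) 1 q * Tb ψ 1 1 from by simp [Bb],
        ih (shiftFam ψ 1) hc1 0 q (by omega)]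
      simp only [Bb, one_mul, fall_shift]
      rw [show Tb ψ 1 1 = ψ 1 from by simp [Tb, fall]]
      rw [add_mul, show (1:ℕ) + 1 = 2 from rfl]
      have : fall ψ 2 (q + 1) * ψ 1 = fall ψ 1 (q + 1 + 1) := rfl
      rw [this]
      abel
    | p + 1, 0 =>
      rw [show Bb ψ (p + 1 + 1) (0 + 1) =
          Bb (shiftFam ψ 1) (p + 1) 1 + Bb (shiftFam ψ 1) (p + 2) 0 * Tb ψ (p + 2) 1
          from by simp [Bb],
        show Bb ψ (p + 1) 1 =
          Bb (shiftFam ψ 1) p 1 + Bb (shiftFam ψ 1) (p + 1) 0 * Tb ψ (p + 1) 1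
          from by simp [Bb],
        ih (shiftFam ψ 1) hc1 p 0 (by omega)]
      simp only [Bb_zero, one_mul, fall_shift]
      have hf : fall ψ (p + 1 + 1) (0 + 1) = ψ (p + 2) := by simp [fall]
      have hT : Tb ψ (p + 1) 1 * ψ (p + 2) = Tb ψ (p + 2) 1 := (Tb_one_succ ψ (p + 1)).symm
      rw [hf, add_mul, hT]
      abel
    | p + 1, q + 1 =>
      rw [show Bb ψ (p + 1 + 1) (q + 1 + 1) =
          Bb (shiftFam ψ 1) (p + 1) (q + 1 + 1)
            + Bb (shiftFam ψ 1) (p + 1 + 1) (q + 1) * Tb ψ (p + 1 + 1) 1 from by simp [Bb],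
        show Bb ψ (p + 1 + 1) (q + 1) =
          Bb (shiftFam ψ 1) (p + 1) (q + 1)
            + Bb (shiftFam ψ 1) (p + 1 + 1) q * Tb ψ (p + 1 + 1) 1 from by simp [Bb],
        show Bb ψ (p + 1) (q + 1 + 1) =
          Bb (shiftFam ψ 1) p (q + 1 + 1)
            + Bb (shiftFam ψ 1) (p + 1) (q + 1) * Tb ψ (p + 1) 1 from by simp [Bb],
        ih (shiftFam ψ 1) hc1 p (q + 1) (by omega),
        ih (shiftFam ψ 1) hc1 (p + 1) q (by omega)]
      simp only [fall_shift]
      have hsw : fall ψ (p + 1 + 1 + 1) (q + 1) * Tb ψ (p + 1 + 1) 1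
          = Tb ψ (p + 1) 1 * fall ψ (p + 1 + 1) (q + 1 + 1) :=
        T_swap ψ hc (p + 1) (q + 1)
      rw [add_mul, add_mul, mul_assoc, hsw, ← mul_assoc]
      abel

/-- the braided-integer summation identity
`∑_{j=0}^{t} B(s, j) ∘ T^{[s]}_{1,j} = B(s+1, t)`, where `T^{[s]}_{1,j}` braids strand
`s+1` past the next `j` strands. -/
theorem braided_binomial_sum_identity (ψ : ℕ → A)
    (hbraid : ∀ i, ψ i * ψ (i + 1) * ψ i = ψ (i + 1) * ψ i * ψ (i + 1))
    (hcomm : ∀ i j, i + 2 ≤ j → ψ i * ψ j = ψ j * ψ i)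
    (s t : ℕ) :
    (∑ j ∈ Finset.range (t + 1), Bb ψ s j * Tb (shiftFam ψ s) 1 j)
      = Bb ψ (s + 1) t := by
  induction t with
  | zero =>
    simp [Bb_zero, Tb, fall]
  | succ t ih =>
    rw [Finset.sum_range_succ, ih,
      Bb_last_rec (s + t) ψ hcomm s t (le_refl _)]
    congr 1
    rw [show Tb (shiftFam ψ s) 1 (t + 1) = fall (shiftFam ψ s) 1 (t + 1) from by simp [Tb],
      fall_shift, Nat.add_comm 1 s]
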